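/- Let a ∈ C_K with |a| > 1 and set R = |a|^{−1/(p−1)}. Then φ_a maps the closed disk D̄_R(0) onto itself: φ_a(D̄_R(0)) = D̄_R(0). -/

import Mathlib

open Polynomial

/-- The polynomial map `φ_a(z) = (1-a) z^(p+1) + a z^p`. -/
def phi {K : Type*} [Field K] (p : ℕ) (a : K) (z : K) : K :=
  (1 - a) * z ^ (p + 1) + a * z ^ p

section aux
variable {K : Type*} [NontriviallyNormedField K] [IsUltrametricDist K]

lemma my_norm_add_eq_left {x y : K} (h : ‖y‖ < ‖x‖) : ‖x + y‖ = ‖x‖ := by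
  rw [IsUltrametricDist.norm_add_eq_max_of_norm_ne_norm h.ne', max_eq_left h.le]

lemma my_norm_one_sub_eq {a : K} (ha : 1 < ‖a‖) : ‖1 - a‖ = ‖a‖ := by
  have h : ‖(1:K)‖ ≠ ‖-a‖ := by rw [norm_neg, norm_one]; exact ha.ne
  rw [sub_eq_add_neg, IsUltrametricDist.norm_add_eq_max_of_norm_ne_norm h, norm_neg, norm_one,
    max_eq_right ha.le]

lemma my_norm_msprod (s : Multiset K) : ‖s.prod‖ = (s.map (fun x => ‖x‖)).prod := by
  simpa using map_multiset_prod (normHom : K →*₀ ℝ).toMonoidHom s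

/-- Any preimage of a point of the small ball is either in the ball or has norm one. -/
lemma root_norm_cases {p : ℕ} (hp : p.Prime) {a : K} (ha : 1 < ‖a‖) {R : ℝ}
    (hRpos : 0 < R) (hRlt1 : R < 1) (hkey : ‖a‖ * R ^ p = R)
    {z w : K} (hzw : phi p a z = w) (hw : ‖w‖ ≤ R) : ‖z‖ ≤ R ∨ ‖z‖ = 1 := by
  have ha0 : (0:ℝ) < ‖a‖ := lt_trans one_pos ha
  have hns : ‖1 - a‖ = ‖a‖ := my_norm_one_sub_eq ha
  by_contra hcon
  push_neg at hcon
  obtain ⟨hzR, hz1⟩ := hcon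
  have hz0 : (0:ℝ) < ‖z‖ := lt_trans hRpos hzR
  rcases lt_or_gt_of_ne hz1 with h1 | h1
  · -- ‖z‖ < 1 : dominant term is a z^p
    have hlt : ‖(1 - a) * z ^ (p+1)‖ < ‖a * z ^ p‖ := by
      rw [norm_mul, norm_mul, norm_pow, norm_pow, hns, pow_succ]
      calc ‖a‖ * (‖z‖ ^ p * ‖z‖) < ‖a‖ * (‖z‖ ^ p * 1) := by
            apply mul_lt_mul_of_pos_left _ ha0
            exact mul_lt_mul_of_pos_left h1 (pow_pos hz0 p)
        _ = ‖a‖ * ‖z‖ ^ p := by ring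
    have heq : ‖phi p a z‖ = ‖a‖ * ‖z‖ ^ p := by
      rw [phi, add_comm, my_norm_add_eq_left hlt, norm_mul, norm_pow]
    have : R < ‖w‖ := by
      rw [← hzw, heq, ← hkey]
      exact mul_lt_mul_of_pos_left (pow_lt_pow_left₀ hzR hRpos.le hp.ne_zero) ha0
    exact absurd hw (not_le.mpr this)
  · -- ‖z‖ > 1 : dominant term is (1-a) z^(p+1)
    have hlt : ‖a * z ^ p‖ < ‖(1 - a) * z ^ (p+1)‖ := by
      rw [norm_mul, norm_mul, norm_pow, norm_pow, hns, pow_succ]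
      calc ‖a‖ * ‖z‖ ^ p = ‖a‖ * (‖z‖ ^ p * 1) := by ring
        _ < ‖a‖ * (‖z‖ ^ p * ‖z‖) := by
            apply mul_lt_mul_of_pos_left _ ha0
            exact mul_lt_mul_of_pos_left h1 (pow_pos hz0 p)
    have heq : ‖phi p a z‖ = ‖a‖ * ‖z‖ ^ (p+1) := by
      rw [phi, my_norm_add_eq_left hlt, norm_mul, norm_pow, hns]
    have : R < ‖w‖ := by
      rw [← hzw, heq]
      have h2 : (1:ℝ) < ‖z‖ ^ (p+1) := one_lt_pow₀ h1 (Nat.succ_ne_zero p)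
      calc R < 1 := hRlt1
        _ < ‖a‖ := ha
        _ = ‖a‖ * 1 := by ring
        _ ≤ ‖a‖ * ‖z‖ ^ (p+1) := by nlinarith
    exact absurd hw (not_le.mpr this)

end aux

/-- For `|a| > 1` and `R = |a|^{-1/(p-1)}`, `φ_a` maps the closed disk
`D̄_R(0)` onto itself. -/
theorem phi_maps_ball_onto_self
    {K : Type*} [NontriviallyNormedField K] [IsUltrametricDist K]
    [CompleteSpace K] [IsAlgClosed K]
    (p : ℕ) (hp : p.Prime) (hpK : ‖(p : K)‖ < 1)
    (a : K) (ha : 1 < ‖a‖) (R : ℝ) (hR : R = ‖a‖ ^ (-(1 : ℝ) / ((p : ℝ) - 1))) :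
    phi p a '' Metric.closedBall (0 : K) R = Metric.closedBall (0 : K) R := by
  have ha0 : (0:ℝ) < ‖a‖ := lt_trans one_pos ha
  have hp2 : 2 ≤ p := hp.two_le
  have hq1 : (0:ℝ) < (p:ℝ) - 1 := by
    have : (2:ℝ) ≤ (p:ℝ) := by exact_mod_cast hp2
    linarith
  have hRpos : 0 < R := by rw [hR]; exact Real.rpow_pos_of_pos ha0 _
  have hRlt1 : R < 1 := by
    rw [hR]
    exact Real.rpow_lt_one_of_one_lt_of_neg ha (div_neg_of_neg_of_pos (by norm_num) hq1)
  have hkey : ‖a‖ * R ^ p = R := by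
    have h1 : R ^ p = ‖a‖ ^ ((-(1:ℝ) / ((p:ℝ) - 1)) * p) := by
      rw [hR, ← Real.rpow_natCast (‖a‖ ^ _) p, ← Real.rpow_mul ha0.le]
    have h2 : (1:ℝ) + (-(1:ℝ) / ((p:ℝ) - 1)) * p = -(1:ℝ) / ((p:ℝ) - 1) := by
      field_simp
      ring
    calc ‖a‖ * R ^ p = ‖a‖ ^ (1:ℝ) * ‖a‖ ^ ((-(1:ℝ) / ((p:ℝ) - 1)) * p) := by
          rw [h1, Real.rpow_one]
      _ = ‖a‖ ^ ((1:ℝ) + (-(1:ℝ) / ((p:ℝ) - 1)) * p) := (Real.rpow_add ha0 _ _).symm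
      _ = R := by rw [h2, hR]
  have hns : ‖1 - a‖ = ‖a‖ := my_norm_one_sub_eq ha
  have ha1 : (1:K) - a ≠ 0 := by
    intro h
    rw [h, norm_zero] at hns
    exact ha0.ne hns
  apply Set.Subset.antisymm
  · -- image ⊆ ball
    rintro w ⟨z, hz, rfl⟩
    rw [Metric.mem_closedBall, dist_zero_right] at hz ⊢
    have h1 : ‖a * z ^ p‖ ≤ R := by
      rw [norm_mul, norm_pow, ← hkey]
      exact mul_le_mul_of_nonneg_left (pow_le_pow_left₀ (norm_nonneg z) hz p) ha0.le
    have h2 : ‖(1 - a) * z ^ (p+1)‖ ≤ R := by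
      rw [norm_mul, norm_pow, hns, pow_succ]
      calc ‖a‖ * (‖z‖ ^ p * ‖z‖) = (‖a‖ * ‖z‖ ^ p) * ‖z‖ := by ring
        _ ≤ R * R := by
            apply mul_le_mul _ hz (norm_nonneg z) hRpos.le
            rw [← hkey]
            exact mul_le_mul_of_nonneg_left (pow_le_pow_left₀ (norm_nonneg z) hz p) ha0.le
        _ ≤ R * 1 := by nlinarith
        _ = R := by ring
    calc ‖phi p a z‖ ≤ max ‖(1 - a) * z ^ (p+1)‖ ‖a * z ^ p‖ :=
          IsUltrametricDist.norm_add_le_max _ _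
      _ ≤ R := max_le h2 h1
  · -- ball ⊆ image : surjectivity via roots of the polynomial
    intro w hw
    rw [Metric.mem_closedBall, dist_zero_right] at hw
    set f : K[X] := C (1 - a) * X ^ (p+1) + C a * X ^ p - C w with hf_def
    have hdeg : f.natDegree = p + 1 := by
      rw [hf_def]
      compute_degree!
    have hfne : f ≠ 0 := by
      intro h
      rw [h, natDegree_zero] at hdeg
      exact (Nat.succ_ne_zero p).symm hdeg
    have hlc : f.leadingCoeff = 1 - a := by
      rw [Polynomial.leadingCoeff, hdeg, hf_def, coeff_sub, coeff_add, coeff_C_mul, coeff_C_mul,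
        coeff_X_pow, coeff_X_pow, coeff_C]
      simp [Nat.succ_ne_self]
    have heval : ∀ z : K, f.eval z = phi p a z - w := by
      intro z; simp [hf_def, phi]
    have hsplit : f.Splits := IsAlgClosed.splits f
    have hfact := hsplit.eq_prod_roots
    -- evaluate at 0
    have hev0 : f.eval 0 = -w := by
      simp [hf_def, zero_pow hp.ne_zero]
    have hprod : -w = (1 - a) * (f.roots.map fun r => -r).prod := by
      conv_lhs => rw [← hev0]
      conv_lhs => rw [hfact]
      rw [eval_mul, eval_C, hlc, eval_multiset_prod, Multiset.map_map]
      congr 2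
      apply Multiset.map_congr rfl
      intro r _
      simp
    -- main claim: some root has norm ≤ R
    have hexists : ∃ r ∈ f.roots, ‖r‖ ≤ R := by
      by_contra hcon
      push_neg at hcon
      have hall : ∀ r ∈ f.roots, ‖r‖ = 1 := by
        intro r hr
        have hroot : f.eval r = 0 := (Polynomial.mem_roots hfne).mp hr
        have hphi : phi p a r = w := by
          have h := heval r
          rw [hroot] at h
          exact sub_eq_zero.mp h.symm
        rcases root_norm_cases hp ha hRpos hRlt1 hkey hphi hw with h | h
        · exact absurd h (not_le.mpr (hcon r hr))
        · exact h
      have hnorm : ‖w‖ = ‖a‖ := by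
        have h1 : ‖-w‖ = ‖1 - a‖ * ‖(f.roots.map fun r => -r).prod‖ := by
          rw [hprod, norm_mul]
        have h2 : ‖(f.roots.map fun r => -r).prod‖ = 1 := by
          rw [my_norm_msprod, Multiset.map_map]
          apply Multiset.prod_eq_one
          intro x hx
          rw [Multiset.mem_map] at hx
          obtain ⟨r, hr, rfl⟩ := hx
          simp [hall r hr]
        rw [norm_neg] at h1
        rw [h1, h2, hns, mul_one]
      rw [hnorm] at hw
      linarith
    obtain ⟨r, hr, hrR⟩ := hexists
    refine ⟨r, ?_, ?_⟩
    · rw [Metric.mem_closedBall, dist_zero_right]; exact hrR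
    · have hroot : f.eval r = 0 := (Polynomial.mem_roots hfne).mp hr
      have := heval r
      rw [hroot] at this
      exact sub_eq_zero.mp this.symm
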